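/- arXiv:1406.6880 — 4 statements merged into one kernel-verified Lean document; each statement's English description precedes it below -/
import Mathlib

section
/- The kernel K(x,y) = e^{xy} is strictly totally positive on ℝ × ℝ: for every m ≥ 1 and every pair of strictly increasing m-tuples x₁ < x₂ < ... < x_m and y₁ < y₂ < ... < y_m of real numbers, the determinant of the m × m matrix with (i,j)-entry e^{x_i y_j} is strictly positive. -/
open Real Set Finset

/-- A nontrivial exponential sum with `n` distinct exponents cannot vanish at `n`
distinct points. -/
lemma expsum_ne_zero : ∀ (n : ℕ) (a c : Fin n → ℝ), StrictMono a → (∃ j, c j ≠ 0) →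
    ∀ z : Fin n → ℝ, StrictMono z → ∃ i, (∑ j, c j * Real.exp (a j * z i)) ≠ 0 := by
  intro n
  induction n with
  | zero => rintro a c _ ⟨j, _⟩; exact j.elim0
  | succ n ih =>
    intro a c ha hc z hz
    by_contra h
    push_neg at h
    set g : ℝ → ℝ := fun t => ∑ j, c j * Real.exp ((a j - a 0) * t) with hg
    have hg0 : ∀ i, g (z i) = 0 := by
      intro i
      have : g (z i) = (∑ j, c j * Real.exp (a j * z i)) * Real.exp (-(a 0 * z i)) := by
        rw [Finset.sum_mul]
        refine Finset.sum_congr rfl fun j _ => ?_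
        rw [mul_assoc, ← Real.exp_add]
        ring_nf
      rw [this, h i, zero_mul]
    have hder : ∀ t : ℝ, HasDerivAt g
        (∑ j, c j * ((a j - a 0) * Real.exp ((a j - a 0) * t))) t := by
      intro t
      apply HasDerivAt.fun_sum
      intro j _
      have h1 : HasDerivAt (fun t : ℝ => (a j - a 0) * t) (a j - a 0) t := by
        simpa using (hasDerivAt_id t).const_mul (a j - a 0)
      have h2 := h1.exp
      simpa [mul_comm] using h2.const_mul (c j)
    have hw : ∀ i : Fin n, ∃ w ∈ Set.Ioo (z i.castSucc) (z i.succ),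
        (∑ j, c j * ((a j - a 0) * Real.exp ((a j - a 0) * w))) = 0 := by
      intro i
      exact exists_hasDerivAt_eq_zero (hz (show i.castSucc < i.succ from Fin.castSucc_lt_succ))
        (fun x _ => (hder x).continuousAt.continuousWithinAt)
        (by rw [hg0, hg0]) (fun x _ => hder x)
    choose w hw1 hw2 using hw
    have hwmono : StrictMono w := by
      intro i j hij
      calc w i < z i.succ := (hw1 i).2
        _ ≤ z j.castSucc := hz.monotone (Fin.succ_le_castSucc_iff.mpr hij)
        _ < w j := (hw1 j).1
    by_cases hcc : ∃ j : Fin n, c j.succ ≠ 0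
    · obtain ⟨j0, hj0⟩ := hcc
      have hpos : ∀ j : Fin n, a 0 < a j.succ := fun j => ha (Fin.succ_pos j)
      obtain ⟨i, hi⟩ := ih (fun j => a j.succ - a 0) (fun j => c j.succ * (a j.succ - a 0))
        (fun i j hij => by
          have := ha (Fin.succ_lt_succ_iff.mpr hij)
          simpa using this)
        ⟨j0, mul_ne_zero hj0 (sub_ne_zero.mpr (hpos j0).ne')⟩ w hwmono
      apply hi
      have := hw2 i
      rw [Fin.sum_univ_succ] at this
      simpa [mul_assoc] using this
    · push_neg at hcc
      obtain ⟨j, hj⟩ := hc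
      have hj0 : c 0 ≠ 0 := by
        rcases Fin.eq_zero_or_eq_succ j with rfl | ⟨k, rfl⟩
        · exact hj
        · exact absurd (hcc k) hj
      have := hg0 0
      simp only [hg, Fin.sum_univ_succ, hcc, zero_mul, Finset.sum_const_zero, add_zero,
        sub_self, Real.exp_zero, mul_one] at this
      exact hj0 this

lemma det_exp_ne_zero (m : ℕ) (x y : Fin m → ℝ) (hx : StrictMono x) (hy : StrictMono y) :
    (Matrix.of fun i j => Real.exp (x i * y j)).det ≠ 0 := by
  intro h
  obtain ⟨v, hv, hmv⟩ := Matrix.exists_mulVec_eq_zero_iff.mpr h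
  obtain ⟨j, hj⟩ := Function.ne_iff.mp hv
  obtain ⟨i, hi⟩ := expsum_ne_zero m y v hy ⟨j, by simpa using hj⟩ x hx
  apply hi
  have := congrFun hmv i
  simp only [Matrix.mulVec, dotProduct, Matrix.of_apply, Pi.zero_apply] at this
  rw [← this]
  refine Finset.sum_congr rfl fun j _ => ?_
  ring

/-- The kernel `K(x,y) = exp (x*y)` is strictly totally positive on `ℝ × ℝ`:
for every `m ≥ 1` and strictly increasing `m`-tuples `x`, `y` of reals, the determinant of
the matrix with entries `exp (x i * y j)` is strictly positive. -/
theorem exp_kernel_strictly_totally_positive :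
    ∀ m : ℕ, 0 < m → ∀ x y : Fin m → ℝ, StrictMono x → StrictMono y →
      0 < (Matrix.of fun i j => Real.exp (x i * y j)).det := by
  intro m _ x y hx hy
  -- interpolate to the point x i = i, y j = j
  set xt : ℝ → Fin m → ℝ := fun t i => (1 - t) * x i + t * i with hxt
  set yt : ℝ → Fin m → ℝ := fun t j => (1 - t) * y j + t * j with hyt
  have hmono : ∀ (u : Fin m → ℝ), StrictMono u → ∀ t ∈ Set.Icc (0:ℝ) 1,
      StrictMono (fun i => (1 - t) * u i + t * i) := by
    intro u hu t ht i j hij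
    have h1 : (1 - t) * u i ≤ (1 - t) * u j :=
      mul_le_mul_of_nonneg_left (hu hij).le (by linarith [ht.2])
    have h2 : t * (i : ℝ) ≤ t * j := by
      have : (i : ℝ) < j := by exact_mod_cast hij
      exact mul_le_mul_of_nonneg_left this.le ht.1
    rcases lt_or_ge t 1 with h | h
    · have h1' : (1 - t) * u i < (1 - t) * u j :=
        mul_lt_mul_of_pos_left (hu hij) (by linarith)
      dsimp only; linarith
    · have ht1 : (0:ℝ) < t := by linarith
      have : (i : ℝ) < j := by exact_mod_cast hij
      have h2' : t * (i : ℝ) < t * j := mul_lt_mul_of_pos_left this ht1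
      dsimp only; linarith
  set F : ℝ → ℝ := fun t => (Matrix.of fun i j => Real.exp (xt t i * yt t j)).det with hF
  have hFcont : Continuous F := by
    apply Continuous.matrix_det
    apply continuous_pi; intro i; apply continuous_pi; intro j
    apply Real.continuous_exp.comp
    fun_prop
  have hFne : ∀ t ∈ Set.Icc (0:ℝ) 1, F t ≠ 0 := fun t ht =>
    det_exp_ne_zero m (xt t) (yt t) (hmono x hx t ht) (hmono y hy t ht)
  have hF1 : 0 < F 1 := by
    have hmat : (Matrix.of fun i j => Real.exp (xt 1 i * yt 1 j))
        = Matrix.vandermonde fun i : Fin m => Real.exp i := by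
      ext i j
      simp only [Matrix.of_apply, Matrix.vandermonde, hxt, hyt]
      norm_num
      rw [← Real.exp_nat_mul, mul_comm]
    have hEq : F 1 = (Matrix.vandermonde fun i : Fin m => Real.exp i).det := by
      show (Matrix.of fun i j => Real.exp (xt 1 i * yt 1 j)).det = _
      rw [hmat]
    rw [hEq, Matrix.det_vandermonde]
    apply Finset.prod_pos
    intro i _
    apply Finset.prod_pos
    intro j hj
    rw [Finset.mem_Ioi] at hj
    have : (i : ℝ) < j := by exact_mod_cast hj
    exact sub_pos.mpr (Real.exp_lt_exp.mpr this)
  have hF0 : F 0 = (Matrix.of fun i j => Real.exp (x i * y j)).det := by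
    simp [hF, hxt, hyt]
  rw [← hF0]
  by_contra hle
  push_neg at hle
  have h0 : F 0 < 0 := lt_of_le_of_ne hle (hFne 0 ⟨le_refl _, zero_le_one⟩)
  have : (0:ℝ) ∈ Set.Icc (F 0) (F 1) := ⟨h0.le, hF1.le⟩
  obtain ⟨t, ht, hFt⟩ := intermediate_value_Icc zero_le_one hFcont.continuousOn this
  exact hFne t ht hFt
end

section
/- For every β > 0, the kernel K(x,y) = (x + y)^{−β} is strictly totally positive on (0,∞) × (0,∞): for all m ≥ 1 and strictly increasing m-tuples 0 < x₁ < ... < x_m and 0 < y₁ < ... < y_m, det[(x_i + y_j)^{−β}] > 0. -/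
open Finset Set
set_option maxHeartbeats 1000000

/-- Derivative of `s ↦ (s+a)^p` at `t` with `t+a > 0`. -/
lemma hasDerivAt_rpow_shift (a p t : ℝ) (ht : 0 < t + a) :
    HasDerivAt (fun s => (s + a) ^ p) (p * (t + a) ^ (p - 1)) t := by
  have h1 : HasDerivAt (fun s : ℝ => s + a) 1 t := (hasDerivAt_id t).add_const a
  have h2 := (Real.hasDerivAt_rpow_const (x := t + a) (p := p) (Or.inl ht.ne')).comp t h1
  simpa [Function.comp_def] using h2

/-- Chebyshev-system property: `∑ cⱼ (x+yⱼ)^{-β}` with `m` terms and `m` distinct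
positive zeros forces `c = 0`. -/
lemma cheb : ∀ (m : ℕ) (β : ℝ), 0 < β → ∀ (y : Fin m → ℝ), (∀ j, 0 < y j) →
    Function.Injective y → ∀ (c x : Fin m → ℝ), StrictMono x →
    (∀ i, 0 < x i) → (∀ i, ∑ j, c j * (x i + y j) ^ (-β) = 0) → c = 0 := by
  intro m
  induction m with
  | zero => intro β hβ y hyp hyi c x hx hxp hz; funext j; exact absurd j.2 (by omega)
  | succ m IH =>
    intro β hβ y hyp hyi c x hx hxp hz
    set L := Fin.last m with hL
    set G : ℝ → ℝ := fun t => ∑ j, c j * ((t + y j) ^ (-β) * (t + y L) ^ β) with hG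
    set G' : ℝ → ℝ := fun t =>
      ∑ j, c j * (β * (y j - y L) * ((t + y j) ^ (-(β + 1)) * (t + y L) ^ (β - 1))) with hG'
    have hyLpos := hyp L
    have hder : ∀ t : ℝ, 0 < t → HasDerivAt G (G' t) t := by
      intro t ht
      have : HasDerivAt G
          (∑ j, c j * ((-β * (t + y j) ^ (-β - 1)) * (t + y L) ^ β +
            (t + y j) ^ (-β) * (β * (t + y L) ^ (β - 1)))) t := by
        apply HasDerivAt.fun_sum
        intro j _
        exact (((hasDerivAt_rpow_shift (y j) (-β) t (add_pos ht (hyp j))).mul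
          (hasDerivAt_rpow_shift (y L) β t (add_pos ht (hyp L))))).const_mul (c j)
      convert this using 1
      apply Finset.sum_congr rfl
      intro j _
      have hA : (0:ℝ) < t + y j := add_pos ht (hyp j)
      have hB : (0:ℝ) < t + y L := add_pos ht (hyp L)
      have e1 : (t + y j) ^ (-β) = (t + y j) ^ (-β - 1) * (t + y j) := by
        rw [← Real.rpow_add_one hA.ne' (-β - 1)]; ring_nf
      have e2 : (t + y L) ^ β = (t + y L) ^ (β - 1) * (t + y L) := by
        rw [← Real.rpow_add_one hB.ne' (β - 1)]; ring_nf
      have e3 : -(β + 1) = -β - 1 := by ring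
      rw [e3, e1, e2]
      ring
    have hGz : ∀ i, G (x i) = 0 := by
      intro i
      have : G (x i) = (x i + y L) ^ β * ∑ j, c j * (x i + y j) ^ (-β) := by
        rw [Finset.mul_sum]; apply Finset.sum_congr rfl; intro j _; ring
      rw [this, hz i, mul_zero]
    -- Rolle
    have hrolle : ∀ i : Fin m, ∃ z ∈ Ioo (x i.castSucc) (x i.succ), G' z = 0 := by
      intro i
      have hab : x i.castSucc < x i.succ := hx (Fin.castSucc_lt_succ (i := i))
      have hposIcc : ∀ t ∈ Icc (x i.castSucc) (x i.succ), 0 < t :=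
        fun t ht => lt_of_lt_of_le (hxp _) ht.1
      exact exists_hasDerivAt_eq_zero hab
        (fun t ht => (hder t (hposIcc t ht)).continuousAt.continuousWithinAt)
        ((hGz _).trans (hGz _).symm)
        (fun t ht => hder t (hposIcc t (Ioo_subset_Icc_self ht)))
    choose z hz1 hz2 using hrolle
    have hzpos : ∀ i, 0 < z i := fun i => lt_trans (hxp _) (hz1 i).1
    have hzmono : StrictMono z := by
      intro i i' h
      calc z i < x i.succ := (hz1 i).2
        _ ≤ x i'.castSucc := hx.monotone (by
            have h' : (i : ℕ) < i' := h
            rw [Fin.le_def]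
            simp only [Fin.val_succ, Fin.coe_castSucc]
            omega)
        _ < z i' := (hz1 i').1
    set d : Fin m → ℝ := fun j => c j.castSucc * (β * (y j.castSucc - y L)) with hd
    have hdz : ∀ i, ∑ j, d j * (z i + y (Fin.castSucc j)) ^ (-(β + 1)) = 0 := by
      intro i
      have h0 := hz2 i
      have hB : (0:ℝ) < z i + y L := add_pos (hzpos i) (hyp L)
      have factored : G' (z i) = (z i + y L) ^ (β - 1) *
          ∑ j, c j * (β * (y j - y L)) * (z i + y j) ^ (-(β + 1)) := by
        rw [Finset.mul_sum]; apply Finset.sum_congr rfl; intro j _; ring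
      rw [factored] at h0
      have hsum : ∑ j, c j * (β * (y j - y L)) * (z i + y j) ^ (-(β + 1)) = 0 := by
        rcases mul_eq_zero.1 h0 with h | h
        · exact absurd h (Real.rpow_pos_of_pos hB _).ne'
        · exact h
      rw [Fin.sum_univ_castSucc] at hsum
      simpa [hd, hL, mul_comm, mul_assoc, mul_left_comm] using hsum
    have hd0 : d = 0 := by
      refine IH (β + 1) (by linarith) (fun j => y j.castSucc) (fun j => hyp _)
        (fun a b hab => Fin.castSucc_injective m (hyi hab)) d z hzmono hzpos hdz
    have hcs : ∀ j : Fin m, c j.castSucc = 0 := by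
      intro j
      have := congrFun hd0 j
      simp only [hd, Pi.zero_apply] at this
      rcases mul_eq_zero.1 this with h | h
      · exact h
      · rcases mul_eq_zero.1 h with h' | h'
        · exact absurd h' hβ.ne'
        · exact absurd (hyi (by linarith : y j.castSucc = y L))
            (Fin.ne_last_of_lt (Fin.castSucc_lt_last j))
    have hcL : c L = 0 := by
      have h0 := hz 0
      rw [Fin.sum_univ_castSucc] at h0
      have : c L * (x 0 + y L) ^ (-β) = 0 := by
        simpa [hcs] using h0
      rcases mul_eq_zero.1 this with h | h
      · exact h
      · exact absurd h (Real.rpow_pos_of_pos (add_pos (hxp 0) (hyp L)) _).ne'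
    funext j
    refine Fin.lastCases ?_ ?_ j
    · exact hcL
    · exact fun j => hcs j

/-- The determinant never vanishes. -/
lemma det_ne_zero (β : ℝ) (hβ : 0 < β) (m : ℕ) (x y : Fin m → ℝ) (hx : StrictMono x)
    (hy : StrictMono y) (hxp : ∀ i, 0 < x i) (hyp : ∀ i, 0 < y i) :
    (Matrix.of fun i j => (x i + y j) ^ (-β : ℝ)).det ≠ 0 := by
  intro h
  obtain ⟨c, hc0, hc⟩ := Matrix.exists_mulVec_eq_zero_iff.2 h
  refine hc0 (cheb m β hβ y hyp hy.injective c x hx hxp fun i => ?_)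
  have := congrFun hc i
  simp only [Matrix.mulVec, dotProduct, Matrix.of_apply, Pi.zero_apply] at this
  rw [← this]
  exact Finset.sum_congr rfl fun j _ => mul_comm _ _

/-- Positivity of the base point: `β = 1`, `y = x`. -/
lemma base_pos (m : ℕ) (x : Fin m → ℝ) (hx : StrictMono x) (hxp : ∀ i, 0 < x i) :
    0 < (Matrix.of fun i j => (x i + x j) ^ (-(1:ℝ))).det := by
  set M : Matrix (Fin m) (Fin m) ℝ := Matrix.of fun i j => (x i + x j) ^ (-(1:ℝ)) with hM
  have herm : M.IsHermitian := by
    ext i j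
    simp [hM, Matrix.conjTranspose_apply, add_comm]
  have hps : M.PosSemidef := by
    refine Matrix.PosSemidef.of_dotProduct_mulVec_nonneg herm fun c => ?_
    have hint : ∀ i j : Fin m,
        (x i + x j) ^ (-(1:ℝ)) = ∫ t in (0:ℝ)..1, t ^ (x i + x j - 1) := by
      intro i j
      rw [integral_rpow (Or.inl (by have := hxp i; have := hxp j; linarith))]
      rw [Real.rpow_neg_one]
      rw [Real.one_rpow, Real.zero_rpow (by have := hxp i; have := hxp j; linarith)]
      ring_nf
    have hii : ∀ (p : Fin m × Fin m), IntervalIntegrable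
        (fun t : ℝ => c p.1 * c p.2 * t ^ (x p.1 + x p.2 - 1)) MeasureTheory.volume 0 1 :=
      fun p => (intervalIntegral.intervalIntegrable_rpow'
        (by have := hxp p.1; have := hxp p.2; linarith)).const_mul _
    have key : dotProduct (star c) (M.mulVec c) =
        ∫ t in (0:ℝ)..1, ∑ p : Fin m × Fin m, c p.1 * c p.2 * t ^ (x p.1 + x p.2 - 1) := by
      have e1 : dotProduct (star c) (M.mulVec c)
          = ∑ p : Fin m × Fin m, c p.1 * c p.2 * ((x p.1 + x p.2) ^ (-(1:ℝ))) := by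
        rw [Fintype.sum_prod_type]
        simp only [hM, dotProduct, Matrix.mulVec, star_trivial, Matrix.of_apply,
          Finset.mul_sum]
        exact Finset.sum_congr rfl fun i _ => Finset.sum_congr rfl fun j _ => by ring
      have e2 : ∀ p : Fin m × Fin m, c p.1 * c p.2 * ((x p.1 + x p.2) ^ (-(1:ℝ)))
          = ∫ t in (0:ℝ)..1, c p.1 * c p.2 * t ^ (x p.1 + x p.2 - 1) := by
        intro p
        rw [hint p.1 p.2, intervalIntegral.integral_const_mul]
      have e3 : (∫ t in (0:ℝ)..1, ∑ p : Fin m × Fin m,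
            c p.1 * c p.2 * t ^ (x p.1 + x p.2 - 1))
          = ∑ p : Fin m × Fin m, ∫ t in (0:ℝ)..1, c p.1 * c p.2 * t ^ (x p.1 + x p.2 - 1) :=
        intervalIntegral.integral_finset_sum (fun p _ => hii p)
      rw [e1, e3]
      exact Finset.sum_congr rfl fun p _ => e2 p
    rw [key, intervalIntegral.integral_of_le zero_le_one]
    apply MeasureTheory.setIntegral_nonneg measurableSet_Ioc
    intro t ht
    have h2 : ∑ p : Fin m × Fin m, c p.1 * c p.2 * t ^ (x p.1 + x p.2 - 1) =
        (∑ i, c i * t ^ (x i - 1/2)) * (∑ j, c j * t ^ (x j - 1/2)) := by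
      rw [Finset.sum_mul_sum, Fintype.sum_prod_type]
      refine Finset.sum_congr rfl fun i _ => Finset.sum_congr rfl fun j _ => ?_
      rw [mul_mul_mul_comm, ← Real.rpow_add ht.1]
      ring_nf
    rw [h2]
    exact mul_self_nonneg _
  have hdet : M.det = ∏ i, (herm.eigenvalues i : ℝ) := herm.det_eq_prod_eigenvalues
  have hnonneg : 0 ≤ M.det := by
    rw [hdet]
    exact Finset.prod_nonneg fun i _ => hps.eigenvalues_nonneg i
  have hne := det_ne_zero 1 one_pos m x x hx hx hxp hxp
  rw [← hM] at hne
  exact lt_of_le_of_ne hnonneg (Ne.symm hne)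

/-- For every `β > 0`, the kernel `K(x,y) = (x+y)^(-β)` is strictly totally
positive on `(0,∞) × (0,∞)`: for all `m ≥ 1` and strictly increasing positive tuples `x`,
`y`, `det [(x i + y j)^(-β)] > 0`. -/
theorem inv_power_kernel_stp (β : ℝ) (hβ : 0 < β) :
    ∀ m : ℕ, 0 < m → ∀ x y : Fin m → ℝ, StrictMono x → StrictMono y →
      (∀ i, 0 < x i) → (∀ i, 0 < y i) →
      0 < (Matrix.of fun i j => (x i + y j) ^ (-β : ℝ)).det := by
  intro m _ x y hx hy hxp hyp
  set F : ℝ → ℝ := fun t =>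
    (Matrix.of fun i j => (x i + ((1 - t) * x j + t * y j)) ^
      (-((1 - t) * 1 + t * β))).det with hF
  have hβt : ∀ t ∈ Icc (0:ℝ) 1, 0 < (1 - t) * 1 + t * β := by
    intro t ht
    rcases ht.1.eq_or_lt with h | h
    · rw [← h]; norm_num
    · have : 0 < t * β := mul_pos h hβ
      nlinarith [ht.2]
  have hytp : ∀ t ∈ Icc (0:ℝ) 1, ∀ j, 0 < (1 - t) * x j + t * y j := by
    intro t ht j
    rcases ht.1.eq_or_lt with h | h
    · rw [← h]; simpa using hxp j
    · have h1 : 0 ≤ (1 - t) * x j :=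
        mul_nonneg (by linarith [ht.2]) (hxp j).le
      have h2 : 0 < t * y j := mul_pos h (hyp j)
      linarith
  have hyts : ∀ t ∈ Icc (0:ℝ) 1, StrictMono (fun j => (1 - t) * x j + t * y j) := by
    intro t ht a b hab
    rcases ht.1.eq_or_lt with h | h
    · rw [← h]; simpa using hx hab
    · exact add_lt_add_of_le_of_lt
        (mul_le_mul_of_nonneg_left (hx hab).le (by linarith [ht.2]))
        (mul_lt_mul_of_pos_left (hy hab) h)
  have hFne : ∀ t ∈ Icc (0:ℝ) 1, F t ≠ 0 := by
    intro t ht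
    exact det_ne_zero _ (hβt t ht) m x _ hx (hyts t ht) hxp (hytp t ht)
  have hFcont : ContinuousOn F (Icc 0 1) := by
    have hrw : F = fun t => ∑ σ : Equiv.Perm (Fin m), (((Equiv.Perm.sign σ : ℤ) : ℝ)) *
        ∏ i, (x (σ i) + ((1 - t) * x i + t * y i)) ^ (-((1 - t) * 1 + t * β)) :=
      funext fun t => by simp [hF, Matrix.det_apply']
    rw [hrw]
    refine continuousOn_finset_sum _ fun σ _ => continuousOn_const.mul ?_
    refine continuousOn_finset_prod _ fun i _ => ?_
    intro t ht
    have hbase : (0:ℝ) < x (σ i) + ((1 - t) * x i + t * y i) :=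
      add_pos (hxp _) (hytp t ht i)
    have hcb : ContinuousAt (fun t : ℝ => x (σ i) + ((1 - t) * x i + t * y i)) t :=
      continuousAt_const.add (((continuousAt_const.sub continuousAt_id).mul
        continuousAt_const).add (continuousAt_id.mul continuousAt_const))
    have hce : ContinuousAt (fun t : ℝ => -((1 - t) * 1 + t * β)) t :=
      (((continuousAt_const.sub continuousAt_id).mul continuousAt_const).add
        (continuousAt_id.mul continuousAt_const)).neg
    exact (ContinuousAt.rpow hcb hce (Or.inl hbase.ne')).continuousWithinAt
  have hF0 : 0 < F 0 := by
    have : F 0 = (Matrix.of fun i j => (x i + x j) ^ (-(1:ℝ))).det := by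
      simp [hF]
    rw [this]
    exact base_pos m x hx hxp
  have hF1 : F 1 = (Matrix.of fun i j => (x i + y j) ^ (-β : ℝ)).det := by
    simp [hF]
  by_contra hcon
  push_neg at hcon
  have hF1lt : F 1 < 0 := by
    have hne := hFne 1 (by norm_num)
    rw [hF1] at hne ⊢
    exact lt_of_le_of_ne hcon hne
  have hsub := intermediate_value_Icc' zero_le_one hFcont
  have h0mem : (0:ℝ) ∈ Icc (F 1) (F 0) := ⟨hF1lt.le, hF0.le⟩
  obtain ⟨z, hz, hz0⟩ := hsub h0mem
  exact hFne z hz hz0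
end

section
/- Suppose T : ℝ[x] → ℝ[x] is a linear, invertible, degree-preserving operator that maps every polynomial whose roots all lie in the open interval (c,d) to a polynomial whose roots all lie in the closed interval [a,b]. Then T in fact maps every polynomial with all roots in (c,d) to a polynomial with all roots in the open interval (a,b). -/
open Polynomial

/-- A real polynomial has all of its roots (with multiplicity) in the set `s`:
it is nonzero, splits over `ℝ`, and each root lies in `s`. -/
def RootsIn (p : Polynomial ℝ) (s : Set ℝ) : Prop :=
  p ≠ 0 ∧ (p.roots.card : ℕ) = p.natDegree ∧ ∀ r ∈ p.roots, r ∈ s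

private lemma monic_prodXsubC (R : Multiset ℝ) : ((R.map fun r => X - C r).prod).Monic :=
  monic_multiset_prod_of_monic R _ fun r _ => monic_X_sub_C r

private lemma rootsIn_mk {lc : ℝ} (hlc : lc ≠ 0) (R : Multiset ℝ) {s : Set ℝ}
    (h : ∀ r ∈ R, r ∈ s) :
    RootsIn (C lc * (R.map fun r => X - C r).prod) s ∧
      (C lc * (R.map fun r => X - C r).prod).natDegree = R.card := by
  have hne : C lc * (R.map fun r => X - C r).prod ≠ 0 :=
    mul_ne_zero (by simpa using hlc) (monic_prodXsubC R).ne_zero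
  have hdeg : (C lc * (R.map fun r => X - C r).prod).natDegree = R.card := by
    rw [natDegree_C_mul hlc, natDegree_multiset_prod_X_sub_C_eq_card]
  have hroots : (C lc * (R.map fun r => X - C r).prod).roots = R := by
    rw [roots_C_mul _ hlc, roots_multiset_prod_X_sub_C]
  exact ⟨⟨hne, by rw [hroots, hdeg], by rw [hroots]; exact h⟩, hdeg⟩

private lemma eval_factored {q : ℝ[X]} (hq : q.roots.card = q.natDegree) (x : ℝ) :
    q.eval x = q.leadingCoeff * (q.roots.map fun ρ => x - ρ).prod := by
  conv_lhs => rw [(C_leadingCoeff_mul_prod_multiset_X_sub_C hq).symm]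
  simp [eval_multiset_prod, Multiset.map_map, Function.comp]

private lemma sign_right {a b : ℝ} {q : ℝ[X]} (hq : RootsIn q (Set.Icc a b)) :
    0 ≤ q.eval b * q.leadingCoeff := by
  obtain ⟨-, hcard, hmem⟩ := hq
  have hP : 0 ≤ (q.roots.map fun ρ => b - ρ).prod := by
    apply Multiset.prod_nonneg
    intro x hx
    obtain ⟨ρ, hρ, rfl⟩ := Multiset.mem_map.1 hx
    have := (hmem ρ hρ).2
    linarith
  rw [eval_factored hcard]
  nlinarith [mul_self_nonneg q.leadingCoeff]

private lemma sign_left {a b : ℝ} {q : ℝ[X]} (hq : RootsIn q (Set.Icc a b)) :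
    0 ≤ (-1 : ℝ) ^ q.natDegree * (q.eval a * q.leadingCoeff) := by
  obtain ⟨-, hcard, hmem⟩ := hq
  have hP : 0 ≤ (q.roots.map fun ρ => ρ - a).prod := by
    apply Multiset.prod_nonneg
    intro x hx
    obtain ⟨ρ, hρ, rfl⟩ := Multiset.mem_map.1 hx
    have := (hmem ρ hρ).1
    linarith
  have hsplit : (q.roots.map fun ρ => a - ρ).prod
      = (-1 : ℝ) ^ q.natDegree * (q.roots.map fun ρ => ρ - a).prod := by
    have : (q.roots.map fun ρ => a - ρ) = q.roots.map fun ρ => (-1) * (ρ - a) := by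
      apply Multiset.map_congr rfl
      intro ρ _; ring
    rw [this, Multiset.prod_map_mul, Multiset.map_const', Multiset.prod_replicate, hcard]
  have h1 : ((-1 : ℝ)) ^ q.natDegree * (-1) ^ q.natDegree = 1 := by
    rw [← mul_pow]; norm_num
  have key : (-1 : ℝ) ^ q.natDegree * (q.eval a * q.leadingCoeff)
      = ((-1 : ℝ) ^ q.natDegree * (-1) ^ q.natDegree) *
        (q.leadingCoeff * q.leadingCoeff * (q.roots.map fun ρ => ρ - a).prod) := by
    rw [eval_factored hcard, hsplit]; ring
  rw [key, h1, one_mul]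
  exact mul_nonneg (mul_self_nonneg _) hP

private lemma cancel_lin {E K ε : ℝ} (hK : K ≠ 0) (hε : 0 < ε)
    (h : ∀ s : ℝ, |s| < ε → 0 ≤ (-s * E) * K) : E = 0 := by
  have h1 := h (ε / 2) (by rw [abs_of_pos (by linarith)]; linarith)
  have h2 := h (-(ε / 2)) (by rw [abs_of_neg (by linarith)]; linarith)
  have hEK : E * K = 0 := by nlinarith
  rcases mul_eq_zero.1 hEK with h | h
  · exact h
  · exact absurd h hK

/-- If `T : ℝ[x] → ℝ[x]` is linear, invertible, degree preserving, and maps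
every polynomial with all roots in `(c,d)` to a polynomial with all roots in `[a,b]`, then
`T` in fact maps every polynomial with all roots in `(c,d)` to a polynomial with all roots
in the open interval `(a,b)`. -/
theorem open_interval_improvement (a b c d : ℝ)
    (T : Polynomial ℝ →ₗ[ℝ] Polynomial ℝ)
    (hbij : Function.Bijective T)
    (hdeg : ∀ p : Polynomial ℝ, (T p).degree = p.degree)
    (hmap : ∀ p : Polynomial ℝ, RootsIn p (Set.Ioo c d) → RootsIn (T p) (Set.Icc a b)) :
    ∀ p : Polynomial ℝ, RootsIn p (Set.Ioo c d) → RootsIn (T p) (Set.Ioo a b) := by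
  have hTne : ∀ p : ℝ[X], p ≠ 0 → T p ≠ 0 := by
    intro p hp h
    exact hp (hbij.1 (h.trans (map_zero T).symm))
  have hnd : ∀ p : ℝ[X], (T p).natDegree = p.natDegree :=
    fun p => natDegree_eq_of_degree_eq (hdeg p)
  -- Key: T p never vanishes at the endpoints a and b.
  have key : ∀ n : ℕ, ∀ p : ℝ[X], p.natDegree = n → RootsIn p (Set.Ioo c d) →
      (T p).eval a ≠ 0 ∧ (T p).eval b ≠ 0 := by
    intro n
    induction n with
    | zero =>
      intro p hp0 hp
      have h1 : T p ≠ 0 := hTne p hp.1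
      have h2 : (T p).natDegree = 0 := by rw [hnd, hp0]
      have h3 : T p = C ((T p).coeff 0) := eq_C_of_natDegree_eq_zero h2
      have h4 : (T p).coeff 0 ≠ 0 := fun h => h1 (by rw [h3, h, C_0])
      constructor <;> (rw [h3]; simpa using h4)
    | succ n ih =>
      intro p hpn hp
      obtain ⟨hp0, hcard, hmem⟩ := hp
      have hRcard : p.roots.card = n + 1 := by rw [hcard, hpn]
      have hRne : p.roots ≠ 0 := by
        intro h; rw [h] at hRcard; simp at hRcard
      obtain ⟨r, hr⟩ := Multiset.exists_mem_of_ne_zero hRne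
      have hrIoo : r ∈ Set.Ioo c d := hmem r hr
      set R' : Multiset ℝ := p.roots.erase r with hR'
      set L : ℝ := p.leadingCoeff with hLdef
      have hL : L ≠ 0 := leadingCoeff_ne_zero.2 hp0
      have hcons : r ::ₘ R' = p.roots := Multiset.cons_erase hr
      have hR'card : R'.card = n := by
        have := congrArg Multiset.card hcons
        rw [Multiset.card_cons, hRcard] at this
        omega
      have hR'mem : ∀ t ∈ R', t ∈ Set.Ioo c d :=
        fun t ht => hmem t (Multiset.mem_of_mem_erase ht)
      set m : ℝ[X] := C L * (R'.map fun t => X - C t).prod with hm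
      obtain ⟨hmRoots, hmDeg⟩ := rootsIn_mk hL R' hR'mem
      rw [hR'card] at hmDeg
      -- the perturbed polynomials
      set ps : ℝ → ℝ[X] := fun s => C L * (((r + s) ::ₘ R').map fun t => X - C t).prod
        with hpsdef
      have hps_eq : ∀ s : ℝ, ps s = p - s • m := by
        intro s
        have hp_eq : p = C L * ((p.roots).map fun t => X - C t).prod :=
          (C_leadingCoeff_mul_prod_multiset_X_sub_C hcard).symm
      -- rewrite p via hcons
        have : ps s = C L * ((X - C (r + s)) * (R'.map fun t => X - C t).prod) := by
          rw [hpsdef]; simp [Multiset.map_cons, Multiset.prod_cons]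
        rw [this, hp_eq, ← hcons, smul_eq_C_mul]
        simp only [Multiset.map_cons, Multiset.prod_cons, hm, C_add]
        ring
      have hps : ∀ s : ℝ, r + s ∈ Set.Ioo c d →
          RootsIn (ps s) (Set.Ioo c d) ∧ (ps s).natDegree = n + 1 := by
        intro s hs
        have hmem' : ∀ t ∈ (r + s) ::ₘ R', t ∈ Set.Ioo c d := by
          intro t ht
          rcases Multiset.mem_cons.1 ht with h | h
          · rwa [h]
          · exact hR'mem t h
        obtain ⟨h1, h2⟩ := rootsIn_mk hL ((r + s) ::ₘ R') hmem'
        rw [Multiset.card_cons, hR'card] at h2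
        exact ⟨h1, h2⟩
      -- leading coefficient of T (ps s)
      set K : ℝ := (T p).leadingCoeff with hKdef
      have hK : K ≠ 0 := leadingCoeff_ne_zero.2 (hTne p hp0)
      have hTpdeg : (T p).natDegree = n + 1 := by rw [hnd, hpn]
      have hTmdeg : (T m).natDegree = n := by rw [hnd, hmDeg]
      have hlc : ∀ s : ℝ, r + s ∈ Set.Ioo c d → (T (ps s)).leadingCoeff = K := by
        intro s hs
        have hdeg' : (T (ps s)).natDegree = n + 1 := by rw [hnd, (hps s hs).2]
        have : (T (ps s)).leadingCoeff = (T (ps s)).coeff (n + 1) := by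
          rw [leadingCoeff, hdeg']
        rw [this, hps_eq, map_sub, map_smul, coeff_sub, coeff_smul,
          coeff_eq_zero_of_natDegree_lt (by omega : (T m).natDegree < n + 1)]
        simp [hKdef, leadingCoeff, hTpdeg]
      have heval : ∀ (s x : ℝ), (T (ps s)).eval x = (T p).eval x - s * (T m).eval x := by
        intro s x
        rw [hps_eq, map_sub, map_smul]
        simp
      -- epsilon for perturbation
      set ε : ℝ := min (r - c) (d - r) with hε
      have hεpos : 0 < ε := by
        apply lt_min <;> [linarith [hrIoo.1]; linarith [hrIoo.2]]
      have hsmall : ∀ s : ℝ, |s| < ε → r + s ∈ Set.Ioo c d := by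
        intro s hs
        have h1 : |s| < r - c := lt_of_lt_of_le hs (min_le_left _ _)
        have h2 : |s| < d - r := lt_of_lt_of_le hs (min_le_right _ _)
        have := abs_lt.1 h1
        have := abs_lt.1 h2
        constructor <;> [linarith [(abs_lt.1 h1).1]; linarith [(abs_lt.1 h2).2]]
      -- shared endpoint argument
      have main : ∀ (e K' : ℝ), K' ≠ 0 →
          (∀ s : ℝ, r + s ∈ Set.Ioo c d → 0 ≤ (T (ps s)).eval e * K') →
          (T p).eval e = 0 → (T m).eval e = 0 := by
        intro e K' hK' hsgn h0
        apply cancel_lin hK' hεpos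
        intro s hs
        have := hsgn s (hsmall s hs)
        rw [heval, h0] at this
        linarith [this]
      obtain ⟨iha, ihb⟩ := ih m hmDeg hmRoots
      constructor
      · -- endpoint a
        intro h0
        apply iha
        refine main a ((-1 : ℝ) ^ (n + 1) * K) (by
          apply mul_ne_zero _ hK
          positivity) ?_ h0
        intro s hs
        have hRI := hmap (ps s) (hps s hs).1
        have := sign_left (a := a) (b := b) hRI
        rw [hnd, (hps s hs).2, hlc s hs] at this
        linarith [this]
      · -- endpoint b
        intro h0
        apply ihb
        refine main b K hK ?_ h0
        intro s hs
        have hRI := hmap (ps s) (hps s hs).1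
        have := sign_right (a := a) (b := b) hRI
        rw [hlc s hs] at this
        exact this
  -- conclude
  intro p hp
  obtain ⟨h1, h2, h3⟩ := hmap p hp
  obtain ⟨ha, hb⟩ := key p.natDegree p rfl hp
  refine ⟨h1, h2, fun ρ hρ => ?_⟩
  have hIcc := h3 ρ hρ
  have hroot : (T p).eval ρ = 0 := by
    have := isRoot_of_mem_roots hρ
    exact this
  constructor
  · rcases lt_or_eq_of_le hIcc.1 with h | h
    · exact h
    · exact absurd (h ▸ hroot) ha
  · rcases lt_or_eq_of_le hIcc.2 with h | h
    · exact h
    · exact absurd (h.symm ▸ hroot) hb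
end

section
/- Under the hypotheses of the Iserles–Saff setup, the m-th biorthogonal polynomial with respect to the measure G(x,t)dx and nodes t₁,...,t_m is p_m(x) = Σ_{k=0}^m (q_k/(δ_k h_k)) Q_k(x), where the q_k are determined by requiring Σ_{k=0}^m q_k R_k(t_ℓ) = 0 for ℓ = 1,...,m; explicitly, ∫_a^b p_m(x) G(x,t) dx = Σ_{k=0}^m q_k R_k(t), which vanishes at t = t₁,...,t_m. -/
open Polynomial MeasureTheory

/-- Under the Iserles–Saff setup (orthogonal `Q_k` with norms `h_k`,
`G(x,t) = ∑ δ_k Q_k(x) R_k(t)` with valid termwise integration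
`∫_a^b Q_k(x) G(x,t) dx = δ_k h_k R_k(t)`), the polynomial
`p_m(x) = ∑_{k=0}^m (q_k/(δ_k h_k)) Q_k(x)` satisfies
`∫_a^b p_m(x) G(x,t) dx = ∑_{k=0}^m q_k R_k(t)` for every `t ∈ (c,d)`; in particular, if
the `q_k` are chosen so that `∑_{k=0}^m q_k R_k(t_ℓ) = 0` for nodes `t₁,…,t_m ∈ (c,d)`,
then `p_m` is the `m`-th biorthogonal polynomial with respect to `G(x,t)dx` and these
nodes: `∫_a^b p_m(x) G(x,t_ℓ) dx = 0` for `1 ≤ ℓ ≤ m`. -/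
theorem iserles_saff_biorthogonal (a b c d : ℝ)
    (Q R : ℕ → Polynomial ℝ) (h δ : ℕ → ℝ)
    (hQdeg : ∀ k, (Q k).degree = k) (hRdeg : ∀ k, (R k).degree = k)
    (hh : ∀ k, 0 < h k) (hδ : ∀ k, δ k ≠ 0)
    (G : ℝ → ℝ → ℝ)
    (hGint : ∀ k : ℕ, ∀ t ∈ Set.Ioo c d,
      ∫ x in a..b, (Q k).eval x * G x t = δ k * h k * (R k).eval t)
    (hInt : ∀ k : ℕ, ∀ t ∈ Set.Ioo c d,
      IntervalIntegrable (fun x => (Q k).eval x * G x t) volume a b)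
    (m : ℕ) (q : ℕ → ℝ) :
    (∀ t ∈ Set.Ioo c d,
      ∫ x in a..b,
          (∑ k ∈ Finset.range (m + 1),
            Polynomial.C (q k / (δ k * h k)) * Q k).eval x * G x t =
        (∑ k ∈ Finset.range (m + 1), Polynomial.C (q k) * R k).eval t) ∧
    (∀ t : Fin m → ℝ, (∀ ℓ, t ℓ ∈ Set.Ioo c d) →
      (∀ ℓ, (∑ k ∈ Finset.range (m + 1), Polynomial.C (q k) * R k).eval (t ℓ) = 0) →
      ∀ ℓ, ∫ x in a..b,
          (∑ k ∈ Finset.range (m + 1),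
            Polynomial.C (q k / (δ k * h k)) * Q k).eval x * G x (t ℓ) = 0) := by

  have key : ∀ t ∈ Set.Ioo c d,
      ∫ x in a..b,
          (∑ k ∈ Finset.range (m + 1),
            Polynomial.C (q k / (δ k * h k)) * Q k).eval x * G x t =
        (∑ k ∈ Finset.range (m + 1), Polynomial.C (q k) * R k).eval t := by
    intro t ht
    have heq : ∀ x : ℝ,
        (∑ k ∈ Finset.range (m + 1), Polynomial.C (q k / (δ k * h k)) * Q k).eval x * G x t
        = ∑ k ∈ Finset.range (m + 1), q k / (δ k * h k) * ((Q k).eval x * G x t) := by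
      intro x
      rw [Polynomial.eval_finset_sum, Finset.sum_mul]
      refine Finset.sum_congr rfl fun k _ => ?_
      simp [mul_assoc]
    calc ∫ x in a..b,
          (∑ k ∈ Finset.range (m + 1), Polynomial.C (q k / (δ k * h k)) * Q k).eval x * G x t
        = ∫ x in a..b, ∑ k ∈ Finset.range (m + 1), q k / (δ k * h k) * ((Q k).eval x * G x t) := by
          simp_rw [heq]
      _ = ∑ k ∈ Finset.range (m + 1), ∫ x in a..b, q k / (δ k * h k) * ((Q k).eval x * G x t) := by
          apply intervalIntegral.integral_finset_sum
          intro k _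
          exact (hInt k t ht).const_mul _
      _ = ∑ k ∈ Finset.range (m + 1), q k * (R k).eval t := by
          refine Finset.sum_congr rfl fun k _ => ?_
          rw [intervalIntegral.integral_const_mul, hGint k t ht]
          have hne : δ k * h k ≠ 0 := mul_ne_zero (hδ k) (hh k).ne'
          field_simp
          rw [show q k * δ k * h k * eval t (R k) / (δ k * h k) = q k * eval t (R k) * ((δ k * h k) * (δ k * h k)⁻¹) by ring, mul_inv_cancel₀ hne, mul_one]
      _ = (∑ k ∈ Finset.range (m + 1), Polynomial.C (q k) * R k).eval t := by
          rw [Polynomial.eval_finset_sum]; simp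
  refine ⟨key, fun t ht hz ℓ => ?_⟩
  rw [key (t ℓ) (ht ℓ), hz ℓ]
end
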